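/- Let τ ∈ A₀ and let (τ_k)_{k∈ℕ} be a sequence in A₀ with τ_k → τ. Then there exist K ∈ ℕ and constants C₁ > 0 and C₂ > 0 such that for all k ≥ K, all (m, n) ∈ ℕ₊ × ℕ₊, and all z, z′ ∈ X, one has C₁ ≤ |z′ + m + nτ_k|² / |z + m + nτ|² ≤ C₂. -/

import Mathlib

open Complex Metric Filter Set
open scoped ENNReal NNReal Topology

noncomputable section

/-- The parameter space `A₀ = {u+iv : u ≥ 0, v ≥ 1}`. -/
def A0 : Set ℂ := {τ : ℂ | 0 ≤ τ.re ∧ 1 ≤ τ.im}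

/-- The phase space `X = {z : |z - 1/2| ≤ 1/2}`. -/
def Xcl : Set ℂ := {z : ℂ | ‖z - 1/2‖ ≤ 1/2}

/-- The alphabet `I_τ = {m + nτ : m, n ∈ ℕ₊}`. -/
def Itau (τ : ℂ) : Set ℂ := {b : ℂ | ∃ m n : ℕ+, b = ((m : ℕ) : ℂ) + ((n : ℕ) : ℂ) * τ}

/-- The generator `φ_b(z) = 1/(z+b)`. -/
def phi (b z : ℂ) : ℂ := 1 / (z + b)

lemma Xfacts {z : ℂ} (hz : z ∈ Xcl) : 0 ≤ z.re ∧ |z.im| ≤ 1/2 ∧ ‖z‖ ≤ 1 := by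
  have h1 : |z.re - 1/2| ≤ 1/2 := by
    have := Complex.abs_re_le_norm (z - 1/2)
    simpa [Complex.sub_re] using this.trans hz
  have h2 : |z.im| ≤ 1/2 := by
    have := Complex.abs_im_le_norm (z - 1/2)
    simpa [Complex.sub_im] using this.trans hz
  refine ⟨by cases abs_le.mp h1 with | intro a b => linarith, h2, ?_⟩
  calc ‖z‖ = ‖(z - 1/2) + 1/2‖ := by ring_nf
    _ ≤ ‖z - 1/2‖ + ‖(1/2 : ℂ)‖ := norm_add_le _ _
    _ ≤ 1/2 + 1/2 := by
        have : ‖(1/2 : ℂ)‖ = 1/2 := by norm_num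
        have hz' : ‖z - 1/2‖ ≤ 1/2 := hz
        linarith
    _ = 1 := by norm_num

lemma lower_bd {σ z : ℂ} (hσ : σ ∈ A0) (hz : z ∈ Xcl) (m n : ℕ+) :
    ((m:ℝ)^2 + (n:ℝ)^2)/4 ≤ ‖z + ((m:ℕ):ℂ) + ((n:ℕ):ℂ) * σ‖^2 := by
  obtain ⟨hre, him⟩ := hσ
  obtain ⟨hzre, hzim, -⟩ := Xfacts hz
  have hm1 : (1:ℝ) ≤ (m:ℕ) := by exact_mod_cast m.one_le
  have hn1 : (1:ℝ) ≤ (n:ℕ) := by exact_mod_cast n.one_le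
  set w := z + ((m:ℕ):ℂ) + ((n:ℕ):ℂ) * σ with hw
  have hwre : w.re = z.re + (m:ℕ) + (n:ℕ) * σ.re := by simp [hw]
  have hwim : w.im = z.im + (n:ℕ) * σ.im := by simp [hw]
  have h1 : (m:ℝ) ≤ w.re := by rw [hwre]; nlinarith
  have h2 : (n:ℝ)/2 ≤ w.im := by
    rw [hwim]
    have : |z.im| ≤ 1/2 := hzim
    rw [abs_le] at this
    nlinarith
  have hsq : ‖w‖^2 = w.re^2 + w.im^2 := by
    rw [Complex.sq_norm, Complex.normSq_apply]; ring
  rw [hsq]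
  nlinarith [sq_nonneg w.re, sq_nonneg w.im]

lemma upper_bd {σ z : ℂ} (hz : z ∈ Xcl) (m n : ℕ+) (B : ℝ) (hB : ‖σ‖ + 2 ≤ B) :
    ‖z + ((m:ℕ):ℂ) + ((n:ℕ):ℂ) * σ‖^2 ≤ 2 * B^2 * ((m:ℝ)^2 + (n:ℝ)^2) := by
  obtain ⟨-, -, hz1⟩ := Xfacts hz
  have hm1 : (1:ℝ) ≤ (m:ℕ) := by exact_mod_cast m.one_le
  have hn1 : (1:ℝ) ≤ (n:ℕ) := by exact_mod_cast n.one_le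
  have hσ0 : 0 ≤ ‖σ‖ := norm_nonneg σ
  have h1 : ‖z + ((m:ℕ):ℂ) + ((n:ℕ):ℂ) * σ‖ ≤ 1 + (m:ℝ) + (n:ℝ) * ‖σ‖ := by
    calc ‖z + ((m:ℕ):ℂ) + ((n:ℕ):ℂ) * σ‖ ≤ ‖z‖ + ‖((m:ℕ):ℂ)‖ + ‖((n:ℕ):ℂ) * σ‖ :=
          norm_add₃_le
      _ = ‖z‖ + (m:ℝ) + (n:ℝ) * ‖σ‖ := by
          rw [norm_mul]; norm_num
      _ ≤ 1 + (m:ℝ) + (n:ℝ) * ‖σ‖ := by linarith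
  have h2 : 1 + (m:ℝ) + (n:ℝ) * ‖σ‖ ≤ B * ((m:ℝ) + (n:ℝ)) := by nlinarith
  have h0 : (0:ℝ) ≤ ‖z + ((m:ℕ):ℂ) + ((n:ℕ):ℂ) * σ‖ := norm_nonneg _
  have h3 : ‖z + ((m:ℕ):ℂ) + ((n:ℕ):ℂ) * σ‖^2 ≤ (B * ((m:ℝ)+(n:ℝ)))^2 := by
    apply sq_le_sq' <;> nlinarith
  nlinarith [sq_nonneg ((m:ℝ) - (n:ℝ))]

/-- Uniform two-sided bound on the ratios `|z' + m + nτ_k|²/|z + m + nτ|²`. -/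
theorem stmt9 :
    ∀ τ ∈ A0, ∀ τseq : ℕ → ℂ, (∀ k, τseq k ∈ A0) →
      Tendsto τseq atTop (𝓝 τ) →
      ∃ K : ℕ, ∃ C₁ C₂ : ℝ, 0 < C₁ ∧ 0 < C₂ ∧
        ∀ k, K ≤ k → ∀ m n : ℕ+, ∀ z ∈ Xcl, ∀ z' ∈ Xcl,
          C₁ ≤ ‖z' + ((m : ℕ) : ℂ) + ((n : ℕ) : ℂ) * τseq k‖ ^ 2 /
                ‖z + ((m : ℕ) : ℂ) + ((n : ℕ) : ℂ) * τ‖ ^ 2 ∧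
          ‖z' + ((m : ℕ) : ℂ) + ((n : ℕ) : ℂ) * τseq k‖ ^ 2 /
                ‖z + ((m : ℕ) : ℂ) + ((n : ℕ) : ℂ) * τ‖ ^ 2 ≤ C₂ := by
  intro τ hτ τseq hseq hconv
  obtain ⟨K, hK⟩ := Metric.tendsto_atTop.mp hconv 1 one_pos
  set B := ‖τ‖ + 3 with hBdef
  have hB0 : 0 < B := by positivity
  refine ⟨K, 1/(8*B^2), 8*B^2, by positivity, by positivity, ?_⟩
  intro k hk m n z hz z' hz'
  have hτk : ‖τseq k‖ ≤ ‖τ‖ + 1 := by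
    have h := hK k hk
    rw [dist_eq_norm] at h
    calc ‖τseq k‖ = ‖(τseq k - τ) + τ‖ := by ring_nf
      _ ≤ ‖τseq k - τ‖ + ‖τ‖ := norm_add_le _ _
      _ ≤ ‖τ‖ + 1 := by linarith
  have hN_lo := lower_bd (hseq k) hz' m n
  have hN_hi := upper_bd (σ := τseq k) hz' m n B (by rw [hBdef]; linarith)
  have hD_lo := lower_bd hτ hz m n
  have hD_hi := upper_bd (σ := τ) hz m n B (by rw [hBdef]; linarith)
  set S := (m:ℝ)^2 + (n:ℝ)^2 with hS
  have hm1 : (1:ℝ) ≤ (m:ℕ) := by exact_mod_cast m.one_le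
  have hS0 : 0 < S := by positivity
  set N := ‖z' + ((m:ℕ):ℂ) + ((n:ℕ):ℂ) * τseq k‖^2
  set D := ‖z + ((m:ℕ):ℂ) + ((n:ℕ):ℂ) * τ‖^2
  have hD0 : 0 < D := lt_of_lt_of_le (by positivity) hD_lo
  have hN0 : 0 ≤ N := by positivity
  constructor
  · have key : (S/4)/(2*B^2*S) ≤ N/D :=
      div_le_div₀ hN0 hN_lo hD0 hD_hi
    have heq : (S/4)/(2*B^2*S) = 1/(8*B^2) := by
      field_simp
      ring
    linarith [heq ▸ key]
  · have key : N/D ≤ (2*B^2*S)/(S/4) :=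
      div_le_div₀ (by positivity) hN_hi (by positivity) hD_lo
    have heq : (2*B^2*S)/(S/4) = 8*B^2 := by
      field_simp
      ring
    linarith [heq ▸ key]
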